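/- Let H = H₊ ⊕ H₋ with ε = π₊ - π₋. Suppose A and B are bounded operators on H whose off-diagonal blocks A₊₋, A₋₊, B₊₋, B₋₊ are Hilbert-Schmidt. Define λ(A,B) := Tr([A₊₊, B₊₊] - ([A,B])₊₊), where the trace is well-defined because [A₊₊,B₊₊] - ([A,B])₊₊ = B₊₋A₋₊ - A₊₋B₋₊ is trace class. Then λ(A,B) = Tr(B₊₋A₋₊ - A₊₋B₋₊) = ¼ Tr(ε [ε,A] [ε,B]). -/

import Mathlib

open scoped InnerProductSpace

section RingAux

variable {R : Type*} [Ring R]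

lemma aux_ring1 (p a b : R) (hp : p * p = p) :
    ⁅p*a*p, p*b*p⁆ - p*⁅a,b⁆*p =
      (p*b*(1-p))*((1-p)*a*p) - (p*a*(1-p))*((1-p)*b*p) := by
  have hp' : ∀ x : R, p * (p * x) = p * x := fun x => by rw [← mul_assoc, hp]
  simp only [Ring.lie_def, mul_sub, sub_mul, mul_one, one_mul, mul_assoc, hp', hp]
  abel

lemma aux_ring2 (p a b : R) (hp : p * p = p) :
    (p - (1-p)) * (⁅p - (1-p), a⁆ * ⁅p - (1-p), b⁆) =
      ((((1-p)*a*p)*(p*b*(1-p)) - (p*a*(1-p))*((1-p)*b*p))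
        + ((((1-p)*a*p)*(p*b*(1-p)) - (p*a*(1-p))*((1-p)*b*p))
        + ((((1-p)*a*p)*(p*b*(1-p)) - (p*a*(1-p))*((1-p)*b*p))
        + (((1-p)*a*p)*(p*b*(1-p)) - (p*a*(1-p))*((1-p)*b*p))))) := by
  have hp' : ∀ x : R, p * (p * x) = p * x := fun x => by rw [← mul_assoc, hp]
  simp only [Ring.lie_def, mul_sub, sub_mul, mul_one, one_mul, mul_assoc, hp', hp]
  abel

end RingAux

section HSAux

variable {H : Type*} [NormedAddCommGroup H] [InnerProductSpace ℂ H] [CompleteSpace H]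
variable {ι : Type*} (e : HilbertBasis ι ℂ H)

lemma aux_parseval (x : H) : HasSum (fun i => ‖⟪e i, x⟫_ℂ‖ ^ 2) (‖x‖ ^ 2) := by
  have h := e.hasSum_inner_mul_inner x x
  have h2 : (fun i => ⟪x, e i⟫_ℂ * ⟪e i, x⟫_ℂ)
      = fun i => ((‖⟪e i, x⟫_ℂ‖ ^ 2 : ℝ) : ℂ) := by
    funext i
    rw [← inner_conj_symm x (e i), RCLike.conj_mul]
    norm_cast
  rw [h2] at h
  have h3 : ⟪x, x⟫_ℂ = ((‖x‖ ^ 2 : ℝ) : ℂ) := by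
    rw [inner_self_eq_norm_sq_to_K]; norm_cast
  rw [h3] at h
  exact Complex.hasSum_ofReal.mp h

lemma aux_double (X : H →L[ℂ] H) (hX : Summable fun i => ‖X (e i)‖ ^ 2) :
    Summable fun p : ι × ι => ‖⟪e p.2, X (e p.1)⟫_ℂ‖ ^ 2 := by
  refine (summable_prod_of_nonneg (fun p => sq_nonneg _)).2 ⟨fun j => ?_, ?_⟩
  · exact (aux_parseval e (X (e j))).summable
  · exact hX.congr fun j => ((aux_parseval e (X (e j))).tsum_eq).symm

lemma aux_double' (X : H →L[ℂ] H) (hX : Summable fun i => ‖X (e i)‖ ^ 2) :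
    Summable fun p : ι × ι => ‖⟪e p.1, X (e p.2)⟫_ℂ‖ ^ 2 := by
  have h := (aux_double e X hX).prod_symm
  simpa only [Prod.fst_swap, Prod.snd_swap] using h

lemma aux_adjoint (X : H →L[ℂ] H) (hX : Summable fun i => ‖X (e i)‖ ^ 2) :
    Summable fun i => ‖(ContinuousLinearMap.adjoint X) (e i)‖ ^ 2 := by
  have hpt : ∀ p : ι × ι, ‖⟪e p.1, X (e p.2)⟫_ℂ‖ ^ 2
      = ‖⟪e p.2, (ContinuousLinearMap.adjoint X) (e p.1)⟫_ℂ‖ ^ 2 := by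
    intro p
    rw [ContinuousLinearMap.adjoint_inner_right,
      ← inner_conj_symm (X (e p.2)) (e p.1), RCLike.norm_conj]
  have hsum := (aux_double' e X hX).congr hpt
  have h2 := hsum.prod
  refine h2.congr fun i => ?_
  exact (aux_parseval e ((ContinuousLinearMap.adjoint X) (e i))).tsum_eq

lemma aux_diag_summable (X Y : H →L[ℂ] H)
    (hX : Summable fun i => ‖X (e i)‖ ^ 2) (hY : Summable fun i => ‖Y (e i)‖ ^ 2) :
    Summable fun i => ⟪e i, X (Y (e i))⟫_ℂ := by
  apply Summable.of_norm
  refine Summable.of_nonneg_of_le (fun i => norm_nonneg _) (fun i => ?_)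
    (((aux_adjoint e X hX).add hY).div_const 2)
  have h1 : ⟪e i, X (Y (e i))⟫_ℂ = ⟪(ContinuousLinearMap.adjoint X) (e i), Y (e i)⟫_ℂ :=
    (ContinuousLinearMap.adjoint_inner_left X (Y (e i)) (e i)).symm
  rw [h1]
  calc ‖⟪(ContinuousLinearMap.adjoint X) (e i), Y (e i)⟫_ℂ‖
      ≤ ‖(ContinuousLinearMap.adjoint X) (e i)‖ * ‖Y (e i)‖ := norm_inner_le_norm _ _
    _ ≤ (‖(ContinuousLinearMap.adjoint X) (e i)‖ ^ 2 + ‖Y (e i)‖ ^ 2) / 2 := by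
        nlinarith [sq_nonneg (‖(ContinuousLinearMap.adjoint X) (e i)‖ - ‖Y (e i)‖)]

lemma aux_cyclic (X Y : H →L[ℂ] H)
    (hX : Summable fun i => ‖X (e i)‖ ^ 2) (hY : Summable fun i => ‖Y (e i)‖ ^ 2) :
    ∑' i, ⟪e i, X (Y (e i))⟫_ℂ = ∑' i, ⟪e i, Y (X (e i))⟫_ℂ := by
  have hsumf : Summable (Function.uncurry
      fun i j => ⟪e i, X (e j)⟫_ℂ * ⟪e j, Y (e i)⟫_ℂ) := by
    apply Summable.of_norm
    refine Summable.of_nonneg_of_le (fun p => norm_nonneg _) (fun p => ?_)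
      (((aux_double' e X hX).add (aux_double e Y hY)).div_const 2)
    show ‖⟪e p.1, X (e p.2)⟫_ℂ * ⟪e p.2, Y (e p.1)⟫_ℂ‖ ≤ _
    rw [norm_mul]
    nlinarith [sq_nonneg (‖⟪e p.1, X (e p.2)⟫_ℂ‖ - ‖⟪e p.2, Y (e p.1)⟫_ℂ‖),
      norm_nonneg (⟪e p.1, X (e p.2)⟫_ℂ), norm_nonneg (⟪e p.2, Y (e p.1)⟫_ℂ)]
  have h1 : ∀ i, ⟪e i, X (Y (e i))⟫_ℂ = ∑' j, ⟪e i, X (e j)⟫_ℂ * ⟪e j, Y (e i)⟫_ℂ := by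
    intro i
    calc ⟪e i, X (Y (e i))⟫_ℂ
        = ⟪(ContinuousLinearMap.adjoint X) (e i), Y (e i)⟫_ℂ :=
          (ContinuousLinearMap.adjoint_inner_left X (Y (e i)) (e i)).symm
      _ = ∑' j, ⟪(ContinuousLinearMap.adjoint X) (e i), e j⟫_ℂ * ⟪e j, Y (e i)⟫_ℂ :=
          (e.tsum_inner_mul_inner _ _).symm
      _ = ∑' j, ⟪e i, X (e j)⟫_ℂ * ⟪e j, Y (e i)⟫_ℂ :=
          tsum_congr fun j => by rw [ContinuousLinearMap.adjoint_inner_left]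
  have h2 : ∀ i, ⟪e i, Y (X (e i))⟫_ℂ = ∑' j, ⟪e j, X (e i)⟫_ℂ * ⟪e i, Y (e j)⟫_ℂ := by
    intro i
    calc ⟪e i, Y (X (e i))⟫_ℂ
        = ⟪(ContinuousLinearMap.adjoint Y) (e i), X (e i)⟫_ℂ :=
          (ContinuousLinearMap.adjoint_inner_left Y (X (e i)) (e i)).symm
      _ = ∑' j, ⟪(ContinuousLinearMap.adjoint Y) (e i), e j⟫_ℂ * ⟪e j, X (e i)⟫_ℂ :=
          (e.tsum_inner_mul_inner _ _).symm
      _ = ∑' j, ⟪e j, X (e i)⟫_ℂ * ⟪e i, Y (e j)⟫_ℂ :=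
          tsum_congr fun j => by rw [ContinuousLinearMap.adjoint_inner_left]; ring
  rw [tsum_congr h1, tsum_congr h2]
  exact (Summable.tsum_comm (f := fun b c => ⟪e b, X (e c)⟫_ℂ * ⟪e c, Y (e b)⟫_ℂ) hsumf).symm

end HSAux

/-- For an orthogonal decomposition `H = H₊ ⊕ H₋` with `ε = π₊ - π₋`, and bounded operators
`A, B` whose off-diagonal blocks are Hilbert-Schmidt, the operator
`⁅A₊₊, B₊₊⁆ - (⁅A,B⁆)₊₊` equals `B₊₋A₋₊ - A₊₋B₋₊` (hence is trace class), and
`λ(A,B) := Tr(⁅A₊₊,B₊₊⁆ - (⁅A,B⁆)₊₊) = Tr(B₊₋A₋₊ - A₊₋B₋₊) = ¼ Tr(ε⁅ε,A⁆⁅ε,B⁆)`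
(here the product `[ε,A][ε,B]` of commutators), traces computed in a Hilbert basis. -/
theorem stmt_7 (H : Type*) [NormedAddCommGroup H] [InnerProductSpace ℂ H] [CompleteSpace H]
    (K : Submodule ℂ H) [CompleteSpace K]
    {ι : Type*} (e : HilbertBasis ι ℂ H)
    (Pp Pm eps : H →L[ℂ] H)
    (hPp : Pp = K.subtypeL ∘L K.orthogonalProjection)
    (hPm : Pm = Kᗮ.subtypeL ∘L Kᗮ.orthogonalProjection)
    (heps : eps = Pp - Pm)
    (A B : H →L[ℂ] H)
    (hA1 : Summable fun i => ‖(Pp * A * Pm) (e i)‖ ^ 2)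
    (hA2 : Summable fun i => ‖(Pm * A * Pp) (e i)‖ ^ 2)
    (hB1 : Summable fun i => ‖(Pp * B * Pm) (e i)‖ ^ 2)
    (hB2 : Summable fun i => ‖(Pm * B * Pp) (e i)‖ ^ 2) :
    (⁅Pp * A * Pp, Pp * B * Pp⁆ - Pp * ⁅A, B⁆ * Pp
        = (Pp * B * Pm) * (Pm * A * Pp) - (Pp * A * Pm) * (Pm * B * Pp)) ∧
    (∑' i, ⟪e i, (⁅Pp * A * Pp, Pp * B * Pp⁆ - Pp * ⁅A, B⁆ * Pp) (e i)⟫_ℂ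
        = ∑' i, ⟪e i, ((Pp * B * Pm) * (Pm * A * Pp) - (Pp * A * Pm) * (Pm * B * Pp)) (e i)⟫_ℂ) ∧
    (∑' i, ⟪e i, (⁅Pp * A * Pp, Pp * B * Pp⁆ - Pp * ⁅A, B⁆ * Pp) (e i)⟫_ℂ
        = (1/4 : ℂ) * ∑' i, ⟪e i, (eps * (⁅eps, A⁆ * ⁅eps, B⁆)) (e i)⟫_ℂ) := by
  have hone : Pp + Pm = 1 := by
    rw [hPp, hPm, ContinuousLinearMap.one_def]
    exact (Submodule.id_eq_sum_starProjection_self_orthogonalComplement (K := K)).symm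
  have hp2 : Pp * Pp = Pp := by
    ext x
    simp [hPp, ContinuousLinearMap.mul_apply, Submodule.orthogonalProjectionOnto_mem_subspace_eq_self]
    exact Submodule.starProjection_eq_self_iff.mpr (K.orthogonalProjectionOnto x).2
  have hm : Pm = 1 - Pp := by rw [← hone]; abel
  have h1 : ⁅Pp * A * Pp, Pp * B * Pp⁆ - Pp * ⁅A, B⁆ * Pp
      = (Pp * B * Pm) * (Pm * A * Pp) - (Pp * A * Pm) * (Pm * B * Pp) := by
    rw [hm]; exact aux_ring1 Pp A B hp2
  refine ⟨h1, by rw [h1], ?_⟩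
  have heq : eps * (⁅eps, A⁆ * ⁅eps, B⁆)
      = (((Pm*A*Pp)*(Pp*B*Pm) - (Pp*A*Pm)*(Pm*B*Pp))
        + ((((Pm*A*Pp)*(Pp*B*Pm) - (Pp*A*Pm)*(Pm*B*Pp)))
        + ((((Pm*A*Pp)*(Pp*B*Pm) - (Pp*A*Pm)*(Pm*B*Pp)))
        + (((Pm*A*Pp)*(Pp*B*Pm) - (Pp*A*Pm)*(Pm*B*Pp)))))) := by
    rw [heps, hm]; exact aux_ring2 Pp A B hp2
  set X : H →L[ℂ] H := Pp * B * Pm with hXdef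
  set Y : H →L[ℂ] H := Pm * A * Pp with hYdef
  set X2 : H →L[ℂ] H := Pp * A * Pm with hX2def
  set Y2 : H →L[ℂ] H := Pm * B * Pp with hY2def
  have s1 : Summable fun i => ⟪e i, X (Y (e i))⟫_ℂ := aux_diag_summable e X Y hB1 hA2
  have s2 : Summable fun i => ⟪e i, X2 (Y2 (e i))⟫_ℂ := aux_diag_summable e X2 Y2 hA1 hB2
  have s3 : Summable fun i => ⟪e i, Y (X (e i))⟫_ℂ := aux_diag_summable e Y X hA2 hB1
  have hcyc : ∑' i, ⟪e i, X (Y (e i))⟫_ℂ = ∑' i, ⟪e i, Y (X (e i))⟫_ℂ :=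
    aux_cyclic e X Y hB1 hA2
  rw [h1]
  have hL : ∑' i, ⟪e i, (X * Y - X2 * Y2) (e i)⟫_ℂ
      = ∑' i, ⟪e i, (Y * X - X2 * Y2) (e i)⟫_ℂ := by
    have e1 : (fun i => ⟪e i, (X * Y - X2 * Y2) (e i)⟫_ℂ)
        = fun i => ⟪e i, X (Y (e i))⟫_ℂ - ⟪e i, X2 (Y2 (e i))⟫_ℂ := by
      funext i
      simp only [ContinuousLinearMap.sub_apply, ContinuousLinearMap.mul_apply, inner_sub_right]
    have e3 : (fun i => ⟪e i, (Y * X - X2 * Y2) (e i)⟫_ℂ)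
        = fun i => ⟪e i, Y (X (e i))⟫_ℂ - ⟪e i, X2 (Y2 (e i))⟫_ℂ := by
      funext i
      simp only [ContinuousLinearMap.sub_apply, ContinuousLinearMap.mul_apply, inner_sub_right]
    rw [e1, e3, Summable.tsum_sub s1 s2, Summable.tsum_sub s3 s2, hcyc]
  rw [hL]
  have hR : (fun i => ⟪e i, (eps * (⁅eps, A⁆ * ⁅eps, B⁆)) (e i)⟫_ℂ)
      = fun i => (4:ℂ) * ⟪e i, (Y * X - X2 * Y2) (e i)⟫_ℂ := by
    funext i
    rw [heq]
    simp only [ContinuousLinearMap.add_apply, ContinuousLinearMap.sub_apply,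
      ContinuousLinearMap.mul_apply, inner_add_right, inner_sub_right]
    ring
  rw [hR, tsum_mul_left]
  ring
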